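/- Let 0 < α < 1. Then γ(α,δ) ≥ 0 for every δ ∈ (0, α) ∪ [1, α+1), and γ(α,δ) ≤ 0 for every δ ∈ (α, 1). -/
import Mathlib


open MeasureTheory Set

/-- The coefficient `γ(α,p)` of the fractional Laplacian acting on power functions:
`γ(α,p) = ((p-1)/α) ∫₀^∞ v^{p-2} (|v-1|^{α-p} - (v+1)^{α-p}) dv` for `p ≠ 1`, and
`γ(α,1) = (1/α) ∫₀^∞ v⁻¹ (|v-1|^{α-1} - (v+1)^{α-1}) dv`
(note `v ^ ((1:ℝ) - 2) = v⁻¹` for `v > 0`). -/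
noncomputable def gammaCoef (α p : ℝ) : ℝ :=
  (if p = 1 then 1 / α else (p - 1) / α) *
    ∫ v in Ioi (0 : ℝ), v ^ (p - 2) * (|v - 1| ^ (α - p) - (v + 1) ^ (α - p))

lemma aux_int_nonneg (α δ : ℝ) (hδ : α < δ) :
    0 ≤ ∫ v in Ioi (0 : ℝ), v ^ (δ - 2) * (|v - 1| ^ (α - δ) - (v + 1) ^ (α - δ)) := by
  apply integral_nonneg_of_ae
  rw [Filter.EventuallyLE, ae_restrict_iff' measurableSet_Ioi]
  have h1 : ∀ᵐ (v : ℝ), v ≠ (1 : ℝ) := by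
    rw [ae_iff]
    have : {a : ℝ | ¬a ≠ 1} = {1} := by ext x; simp
    rw [this]
    exact measure_singleton 1
  filter_upwards [h1] with v hv1 hv
  have hv0 : (0 : ℝ) < v := hv
  have habs : |v - 1| ≤ v + 1 := abs_le.mpr ⟨by linarith, by linarith⟩
  have habs0 : 0 < |v - 1| := abs_pos.mpr (sub_ne_zero.mpr hv1)
  have h2 : (v + 1) ^ (α - δ) ≤ |v - 1| ^ (α - δ) :=
    Real.rpow_le_rpow_of_nonpos habs0 habs (by linarith)
  have h3 : (0 : ℝ) ≤ v ^ (δ - 2) := Real.rpow_nonneg hv0.le _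
  simp only [Pi.zero_apply]
  nlinarith

lemma aux_int_nonpos (α δ : ℝ) (hδ : δ < α) :
    (∫ v in Ioi (0 : ℝ), v ^ (δ - 2) * (|v - 1| ^ (α - δ) - (v + 1) ^ (α - δ))) ≤ 0 := by
  apply integral_nonpos_of_ae
  rw [Filter.EventuallyLE, ae_restrict_iff' measurableSet_Ioi]
  filter_upwards with v hv
  have hv0 : (0 : ℝ) < v := hv
  have habs : |v - 1| ≤ v + 1 := abs_le.mpr ⟨by linarith, by linarith⟩
  have h2 : |v - 1| ^ (α - δ) ≤ (v + 1) ^ (α - δ) :=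
    Real.rpow_le_rpow (abs_nonneg _) habs (by linarith)
  have h3 : (0 : ℝ) ≤ v ^ (δ - 2) := Real.rpow_nonneg hv0.le _
  simp only [Pi.zero_apply]
  nlinarith

/-- For `0 < α < 1`, `γ(α,δ) ≥ 0` for all `δ ∈ (0,α) ∪ [1, α+1)` and
`γ(α,δ) ≤ 0` for all `δ ∈ (α, 1)`. -/
theorem stmt5 (α : ℝ) (hα0 : 0 < α) (hα1 : α < 1) :
    (∀ δ : ℝ, δ ∈ Ioo (0 : ℝ) α ∪ Ico (1 : ℝ) (α + 1) → 0 ≤ gammaCoef α δ) ∧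
    (∀ δ : ℝ, δ ∈ Ioo α (1 : ℝ) → gammaCoef α δ ≤ 0) := by
  constructor
  · intro δ hδ
    unfold gammaCoef
    rcases hδ with ⟨hδ0, hδα⟩ | ⟨hδ1, hδα⟩
    · rw [if_neg (by intro h; rw [h] at hδα; linarith)]
      exact mul_nonneg_iff.mpr (Or.inr ⟨div_nonpos_iff.mpr (Or.inr ⟨by linarith, hα0.le⟩),
        aux_int_nonpos α δ hδα⟩)
    · have hint := aux_int_nonneg α δ (by linarith)
      split_ifs with h
      · exact mul_nonneg (by positivity) hint
      · exact mul_nonneg (div_nonneg (by cases lt_or_eq_of_le hδ1 with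
          | inl h' => linarith
          | inr h' => exact absurd h'.symm h) hα0.le) hint
  · intro δ ⟨hδα, hδ1⟩
    unfold gammaCoef
    rw [if_neg (by intro h; rw [h] at hδ1; linarith)]
    exact mul_nonpos_iff.mpr (Or.inr ⟨div_nonpos_iff.mpr (Or.inr ⟨by linarith, hα0.le⟩),
      aux_int_nonneg α δ hδα⟩)
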